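/- Let d ≥ 1 and let v_0, v_1, …, v_d be distinct nonzero vectors in ℤ^d with v_1, …, v_d linearly independent over ℚ. Let Γ := {n_1 v_1 + ⋯ + n_d v_d : n_1, …, n_d ∈ ℕ} and suppose w ∈ ℤ^d satisfies Γ ∩ (N·v_0 + Γ) = w + Γ. Then for all a, j, h ∈ ℕ: if h − j − a·H ≥ 0 (as integers) then A_{j,h} ∩ A_{j+aN, h} = j·v_0 + a·w + C_{h−j−aH}, and if h − j − a·H < 0 then A_{j,h} ∩ A_{j+aN, h} = ∅. -/

import Mathlib

open Pointwise

/-- The truncated cone `C_k = {n₁v₁ + ⋯ + n_d v_d : nᵢ ∈ ℕ, n₁ + ⋯ + n_d ≤ k}`. -/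
def truncCone {d : ℕ} (v : Fin d → Fin d → ℤ) (k : ℕ) : Set (Fin d → ℤ) :=
  {x | ∃ n : Fin d → ℕ, (∑ i, n i) ≤ k ∧ x = ∑ i, (n i) • v i}

/-- The translated truncated cone `A_{j,h} = j·v₀ + C_{h-j}` (empty if `j > h`). -/
def truncA {d : ℕ} (v0 : Fin d → ℤ) (v : Fin d → Fin d → ℤ) (j h : ℕ) :
    Set (Fin d → ℤ) :=
  if j ≤ h then (fun x => j • v0 + x) '' truncCone v (h - j) else ∅

/-- The full cone `Γ = {n₁v₁ + ⋯ + n_d v_d : nᵢ ∈ ℕ}`. -/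
def fullCone {d : ℕ} (v : Fin d → Fin d → ℤ) : Set (Fin d → ℤ) :=
  {x | ∃ n : Fin d → ℕ, x = ∑ i, (n i) • v i}

lemma coeff_uniq {d : ℕ} (v : Fin d → Fin d → ℤ)
    (hli : LinearIndependent ℚ (fun i (j : Fin d) => (v i j : ℚ)))
    {m m' : Fin d → ℤ} (h : ∑ i, m i • v i = ∑ i, m' i • v i) : m = m' := by
  have h2 : ∑ i, ((m i : ℚ) - (m' i : ℚ)) • (fun j => (v i j : ℚ)) = 0 := by
    funext j
    have hj : (((∑ i, m i • v i) j : ℤ) : ℚ) = (((∑ i, m' i • v i) j : ℤ) : ℚ) := by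
      exact_mod_cast congrArg (Int.cast : ℤ → ℚ) (congrFun h j)
    simp only [Finset.sum_apply, Pi.smul_apply, smul_eq_mul] at hj
    push_cast at hj
    simp only [Finset.sum_apply, Pi.smul_apply, smul_eq_mul, Pi.zero_apply, sub_mul,
      Finset.sum_sub_distrib, hj, sub_self]
  have h3 := Fintype.linearIndependent_iff.mp hli (fun i => (m i : ℚ) - (m' i : ℚ)) h2
  funext i
  have hh : (m i : ℚ) - (m' i : ℚ) = 0 := h3 i
  have : (m i : ℚ) = (m' i : ℚ) := by linarith
  exact_mod_cast this

lemma mem_truncA {d : ℕ} {v0 : Fin d → ℤ} {v : Fin d → Fin d → ℤ} {j h : ℕ}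
    {x : Fin d → ℤ} :
    x ∈ truncA v0 v j h ↔
      ∃ n : Fin d → ℕ, j + ∑ i, n i ≤ h ∧ x = j • v0 + ∑ i, (n i) • v i := by
  unfold truncA truncCone
  split_ifs with hjh
  · constructor
    · rintro ⟨y, ⟨n, hn, rfl⟩, rfl⟩
      exact ⟨n, by omega, rfl⟩
    · rintro ⟨n, hn, rfl⟩
      exact ⟨∑ i, (n i) • v i, ⟨n, by omega, rfl⟩, rfl⟩
  · simp only [Set.mem_empty_iff_false, false_iff]
    rintro ⟨n, hn, -⟩
    omega

-- sum splitting: ∑ (a*p i + t i) • v i = a • ∑ (p i) • v i + ∑ t i • v i   (ℕ smul)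
lemma sum_split {d : ℕ} (v : Fin d → Fin d → ℤ) (a : ℕ) (p t : Fin d → ℕ) :
    ∑ i, (a * p i + t i) • v i = a • (∑ i, (p i) • v i) + ∑ i, (t i) • v i := by
  rw [Finset.smul_sum, ← Finset.sum_add_distrib]
  exact Finset.sum_congr rfl fun i _ => by rw [add_smul, mul_smul]

lemma sum_nat_int {d : ℕ} (v : Fin d → Fin d → ℤ) (n : Fin d → ℕ) :
    ∑ i, (n i) • v i = ∑ i, ((n i : ℤ)) • v i := by
  exact Finset.sum_congr rfl fun i _ => (Nat.cast_smul_eq_nsmul ℤ (n i) (v i)).symm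

lemma key_lemma {d : ℕ} (v0 : Fin d → ℤ) (v : Fin d → Fin d → ℤ)
    (hli : LinearIndependent ℚ (fun i (j : Fin d) => (v i j : ℚ)))
    (N : ℕ) (p q : Fin d → ℕ)
    (hv0 : (N : ℤ) • v0 = ∑ i, ((p i : ℤ) - (q i : ℤ)) • v i)
    (hpq : ∀ i, p i = 0 ∨ q i = 0)
    (w : Fin d → ℤ) (hwp : w = ∑ i, ((p i : ℤ)) • v i)
    (M : ℕ) (hM : M = max (∑ i, p i) (N + ∑ i, q i))
    (a j h : ℕ) :
    (j + a * M ≤ h →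
      truncA v0 v j h ∩ truncA v0 v (j + a * N) h =
        (fun x => j • v0 + a • w + x) '' truncCone v (h - j - a * M)) ∧
    (h < j + a * M →
      truncA v0 v j h ∩ truncA v0 v (j + a * N) h = ∅) := by
  have hamax : a * M = max (a * ∑ i, p i) (a * (N + ∑ i, q i)) := by
    rw [hM]
    rcases Nat.le_total (∑ i, p i) (N + ∑ i, q i) with hle | hle
    · rw [max_eq_right hle, max_eq_right (Nat.mul_le_mul_left a hle)]
    · rw [max_eq_left hle, max_eq_left (Nat.mul_le_mul_left a hle)]
  have hadd : a * (N + ∑ i, q i) = a * N + a * ∑ i, q i := Nat.mul_add a N _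
  have hsplit0 : (j + a * N) • v0 = j • v0 + a • ((N : ℤ) • v0) := by
    rw [Nat.cast_smul_eq_nsmul, add_smul, mul_smul]
  have hwsum : ∀ t : Fin d → ℕ, ∑ i, (a * p i + t i) • v i = a • w + ∑ i, (t i) • v i := by
    intro t
    rw [sum_split v a p t, hwp, sum_nat_int v p]
  -- forward analysis of membership in the intersection
  have fwd : ∀ x ∈ truncA v0 v j h ∩ truncA v0 v (j + a * N) h,
      ∃ t : Fin d → ℕ, j + a * M + ∑ i, t i ≤ h ∧
        x = j • v0 + a • w + ∑ i, (t i) • v i := by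
    rintro x ⟨hx1, hx2⟩
    obtain ⟨n, hn, rfl⟩ := mem_truncA.mp hx1
    obtain ⟨n', hn', heq⟩ := mem_truncA.mp hx2
    have h2 : ∑ i, (n i) • v i = a • ((N : ℤ) • v0) + ∑ i, (n' i) • v i := by
      rw [hsplit0, add_assoc] at heq
      exact add_left_cancel heq
    have hsum : ∑ i, ((n i : ℤ)) • v i =
        ∑ i, ((a : ℤ) * ((p i : ℤ) - (q i : ℤ)) + (n' i : ℤ)) • v i := by
      rw [sum_nat_int v n, sum_nat_int v n'] at h2
      rw [h2, hv0, ← Nat.cast_smul_eq_nsmul ℤ a, Finset.smul_sum,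
        ← Finset.sum_add_distrib]
      refine Finset.sum_congr rfl fun i _ => ?_
      rw [smul_smul, ← add_smul]
    have hco := coeff_uniq v hli hsum
    have hni : ∀ i, (n i : ℤ) + (a : ℤ) * q i = (n' i : ℤ) + (a : ℤ) * p i :=
      fun i => by linear_combination congrFun hco i
    have e1 : ∀ i, ((a * p i : ℕ) : ℤ) = (a : ℤ) * p i := fun i => by push_cast; ring
    have e2 : ∀ i, ((a * q i : ℕ) : ℤ) = (a : ℤ) * q i := fun i => by push_cast; ring
    have e0 : ∀ i, a * p i = 0 ∨ a * q i = 0 := fun i =>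
      (hpq i).imp (fun h0 => by rw [h0, Nat.mul_zero]) (fun h0 => by rw [h0, Nat.mul_zero])
    set t : Fin d → ℕ := fun i => n i - a * p i with ht
    have hti : ∀ i, n i = a * p i + t i ∧ n' i = a * q i + t i := by
      intro i
      have h1 := hni i
      have h2 := e1 i
      have h3 := e2 i
      have h4 := e0 i
      have ht' : t i = n i - a * p i := rfl
      omega
    have hnt : ∑ i, n i = a * ∑ i, p i + ∑ i, t i := by
      rw [Finset.mul_sum, ← Finset.sum_add_distrib]
      exact Finset.sum_congr rfl fun i _ => (hti i).1
    have hnt' : ∑ i, n' i = a * ∑ i, q i + ∑ i, t i := by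
      rw [Finset.mul_sum, ← Finset.sum_add_distrib]
      exact Finset.sum_congr rfl fun i _ => (hti i).2
    refine ⟨t, by omega, ?_⟩
    have hx : ∑ i, (n i) • v i = a • w + ∑ i, (t i) • v i := by
      rw [← hwsum t]
      exact Finset.sum_congr rfl fun i _ => by rw [(hti i).1]
    rw [hx, add_assoc]
  constructor
  · -- nonempty case
    intro hcase
    ext x
    constructor
    · intro hx
      obtain ⟨t, hts, rfl⟩ := fwd x hx
      exact ⟨∑ i, (t i) • v i, ⟨t, by omega, rfl⟩, rfl⟩
    · rintro ⟨y, ⟨t, hts, rfl⟩, rfl⟩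
      constructor
      · refine mem_truncA.mpr ⟨fun i => a * p i + t i, ?_, ?_⟩
        · beta_reduce
          have hss : ∑ i, (a * p i + t i) = a * ∑ i, p i + ∑ i, t i := by
            rw [Finset.mul_sum, ← Finset.sum_add_distrib]
          omega
        · beta_reduce
          rw [hwsum t, add_assoc]
      · refine mem_truncA.mpr ⟨fun i => a * q i + t i, ?_, ?_⟩
        · beta_reduce
          have hss : ∑ i, (a * q i + t i) = a * ∑ i, q i + ∑ i, t i := by
            rw [Finset.mul_sum, ← Finset.sum_add_distrib]
          omega
        · beta_reduce
          rw [hsplit0, hv0]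
          have hsq : ∑ i, (a * q i + t i) • v i
              = a • (∑ i, ((q i : ℤ)) • v i) + ∑ i, (t i) • v i := by
            rw [sum_split v a q t, sum_nat_int v q]
          have hpqs : ∑ i, ((p i : ℤ) - (q i : ℤ)) • v i + ∑ i, ((q i : ℤ)) • v i
              = ∑ i, ((p i : ℤ)) • v i := by
            rw [← Finset.sum_add_distrib]
            refine Finset.sum_congr rfl fun i _ => ?_
            rw [← add_smul, sub_add_cancel]
          have hc : a • ∑ i, ((p i : ℤ) - (q i : ℤ)) • v i + a • ∑ i, ((q i : ℤ)) • v i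
              = a • w := by
            rw [← smul_add, hpqs, hwp]
          rw [hsq]
          simp only [← add_assoc]
          rw [add_assoc (j • v0) (a • ∑ i, ((p i : ℤ) - (q i : ℤ)) • v i), hc]
  · -- empty case
    intro hcase
    rw [Set.eq_empty_iff_forall_notMem]
    intro x hx
    obtain ⟨t, hts, -⟩ := fwd x hx
    omega

-- divisibility from minimality
lemma N_dvd {d : ℕ} {v0 : Fin d → ℤ} {S : Submodule ℤ (Fin d → ℤ)} {N : ℕ}
    (hN : IsLeast {n : ℕ | 0 < n ∧ (n • v0) ∈ S} N) (k : ℕ) (hk : k • v0 ∈ S) :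
    N ∣ k := by
  obtain ⟨⟨hNpos, hNmem⟩, hNlb⟩ := hN
  have hmod : (k % N) • v0 ∈ S := by
    have h1 : k = N * (k / N) + k % N := (Nat.div_add_mod k N).symm
    have h2 : k • v0 = (k / N) • (N • v0) + (k % N) • v0 := by
      rw [← mul_smul]
      conv_lhs => rw [h1]
      rw [add_smul, Nat.mul_comm]
    have h3 : (k / N) • (N • v0) ∈ S := by
      rw [← Nat.cast_smul_eq_nsmul ℤ (k / N)]
      exact S.smul_mem _ hNmem
    have := S.sub_mem hk h3
    rw [h2] at this
    simpa using this
  by_contra hdvd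
  have hne : k % N ≠ 0 := fun h0 => hdvd (Nat.dvd_of_mod_eq_zero h0)
  have := hNlb ⟨Nat.pos_of_ne_zero hne, hmod⟩
  have := Nat.mod_lt k hNpos
  omega

-- sums of nsmul are in the span
lemma sum_mem_span {d : ℕ} (v : Fin d → Fin d → ℤ) (c : Fin d → ℤ) :
    ∑ i, c i • v i ∈ Submodule.span ℤ (Set.range v) :=
  Submodule.sum_mem _ fun i _ =>
    Submodule.smul_mem _ _ (Submodule.subset_span ⟨i, rfl⟩)


theorem intersection_of_two_truncated_cones (d : ℕ) (hd : 1 ≤ d)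
    (v0 : Fin d → ℤ) (v : Fin d → Fin d → ℤ)
    (hdist : Function.Injective (Fin.cons v0 v : Fin (d + 1) → Fin d → ℤ))
    (hnz : ∀ i : Fin (d + 1), (Fin.cons v0 v : Fin (d + 1) → Fin d → ℤ) i ≠ 0)
    (hli : LinearIndependent ℚ (fun i (j : Fin d) => (v i j : ℚ)))
    (N : ℕ)
    (hN : IsLeast {n : ℕ | 0 < n ∧ (n • v0) ∈ Submodule.span ℤ (Set.range v)} N)
    (H : ℕ)
    (hH : IsLeast {l : ℕ | ∃ j j' : ℕ, j < j' ∧ j' ≤ l ∧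
      (truncA v0 v j l ∩ truncA v0 v j' l).Nonempty} H)
    (w : Fin d → ℤ)
    (hw : fullCone v ∩ ((fun x => N • v0 + x) '' fullCone v) =
      (fun x => w + x) '' fullCone v) :
    ∀ a j h : ℕ,
      (0 ≤ (h : ℤ) - (j : ℤ) - (a : ℤ) * (H : ℤ) →
        truncA v0 v j h ∩ truncA v0 v (j + a * N) h =
          (fun x => j • v0 + a • w + x) '' truncCone v (h - j - a * H)) ∧
      ((h : ℤ) - (j : ℤ) - (a : ℤ) * (H : ℤ) < 0 →
        truncA v0 v j h ∩ truncA v0 v (j + a * N) h = ∅) := by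
  -- extract integer coordinates of N • v0
  obtain ⟨m, hm⟩ := (Submodule.mem_span_range_iff_exists_fun ℤ).mp hN.1.2
  set p : Fin d → ℕ := fun i => (m i).toNat with hp
  set q : Fin d → ℕ := fun i => (-(m i)).toNat with hq
  have hpq : ∀ i, p i = 0 ∨ q i = 0 := by
    intro i
    simp only [hp, hq]
    omega
  have hmpq : ∀ i, m i = (p i : ℤ) - (q i : ℤ) := by
    intro i
    simp only [hp, hq]
    omega
  have hv0' : (N : ℤ) • v0 = ∑ i, ((p i : ℤ) - (q i : ℤ)) • v i := by
    rw [Nat.cast_smul_eq_nsmul, ← hm]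
    exact Finset.sum_congr rfl fun i _ => by rw [← hmpq i]
  -- the key identity N • v0 + ∑ q = ∑ p
  have hNpq : N • v0 + ∑ i, (q i) • v i = ∑ i, (p i) • v i := by
    rw [← Nat.cast_smul_eq_nsmul ℤ N, hv0', sum_nat_int v q, sum_nat_int v p,
      ← Finset.sum_add_distrib]
    exact Finset.sum_congr rfl fun i _ => by rw [← add_smul, sub_add_cancel]
  -- pin down w
  have hw0 : w ∈ fullCone v ∩ ((fun x => N • v0 + x) '' fullCone v) := by
    rw [hw]
    exact ⟨0, ⟨fun _ => 0, by simp⟩, by simp⟩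
  obtain ⟨⟨r, hr⟩, y, ⟨s', rfl⟩, hy⟩ := hw0
  simp only at hy
  have hpmem : (∑ i, (p i) • v i) ∈ fullCone v ∩ ((fun x => N • v0 + x) '' fullCone v) :=
    ⟨⟨p, rfl⟩, ∑ i, (q i) • v i, ⟨q, rfl⟩, hNpq⟩
  rw [hw] at hpmem
  obtain ⟨z, ⟨s, rfl⟩, hz⟩ := hpmem
  simp only at hz
  have e1 : ∑ i, ((r i : ℤ)) • v i = ∑ i, ((p i : ℤ) - (q i : ℤ) + (s' i : ℤ)) • v i := by
    rw [← sum_nat_int v r, ← hr, ← hy, ← Nat.cast_smul_eq_nsmul ℤ N, hv0',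
      sum_nat_int v s', ← Finset.sum_add_distrib]
    exact Finset.sum_congr rfl fun i _ => by rw [← add_smul]
  have e2 : ∑ i, ((p i : ℤ)) • v i = ∑ i, ((r i : ℤ) + (s i : ℤ)) • v i := by
    rw [← sum_nat_int v p, ← hz, hr, sum_nat_int v r, sum_nat_int v s,
      ← Finset.sum_add_distrib]
    exact Finset.sum_congr rfl fun i _ => by rw [← add_smul]
  have hc1 := coeff_uniq v hli e1
  have hc2 := coeff_uniq v hli e2
  have hrp : ∀ i, r i = p i := by
    intro i
    have h1 := congrFun hc1 i
    have h2 := congrFun hc2 i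
    have h3 := hpq i
    omega
  have hwp : w = ∑ i, ((p i : ℤ)) • v i := by
    rw [hr, sum_nat_int v r]
    exact Finset.sum_congr rfl fun i _ => by rw [hrp i]
  -- define M
  set M : ℕ := max (∑ i, p i) (N + ∑ i, q i) with hMdef
  have key := fun a j h => key_lemma v0 v hli N p q hv0' hpq w hwp M hMdef a j h
  have hNpos : 0 < N := hN.1.1
  have hNM : N ≤ M := le_trans (Nat.le_add_right N _) (le_max_right _ _)
  -- H = M
  have hHM : H = M := by
    refine hH.unique ⟨⟨0, N, hNpos, hNM, ?_⟩, ?_⟩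
    · -- nonempty at level M
      have hk := (key 1 0 M).1 (by omega)
      rw [show (0 : ℕ) + 1 * N = N by omega] at hk
      rw [hk]
      refine ⟨(fun x => 0 • v0 + 1 • w + x) 0, Set.mem_image_of_mem _ ?_⟩
      exact ⟨fun _ => 0, by simp, by simp⟩
    · -- lower bound
      rintro l ⟨j0, j0', hlt, hle, x, hx1, hx2⟩
      obtain ⟨n, hn, rfl⟩ := mem_truncA.mp hx1
      obtain ⟨n', hn', heq⟩ := mem_truncA.mp hx2
      set k : ℕ := j0' - j0 with hk
      have hj0' : j0' = j0 + k := by omega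
      have hkv : k • v0 = ∑ i, (n i) • v i - ∑ i, (n' i) • v i := by
        have h2 : j0 • v0 + ∑ i, (n i) • v i = j0 • v0 + (k • v0 + ∑ i, (n' i) • v i) := by
          rw [heq, hj0', add_smul, add_assoc]
        have h3 := add_left_cancel h2
        exact eq_sub_of_add_eq h3.symm
      have hkmem : k • v0 ∈ Submodule.span ℤ (Set.range v) := by
        rw [hkv]
        exact Submodule.sub_mem _
          (by rw [sum_nat_int]; exact sum_mem_span v _)
          (by rw [sum_nat_int]; exact sum_mem_span v _)
      obtain ⟨a, hak⟩ := N_dvd hN k hkmem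
      have ha : 1 ≤ a := by
        rcases Nat.eq_zero_or_pos a with h0 | h0
        · rw [h0, Nat.mul_zero] at hak
          omega
        · omega
      have hj0'' : j0' = j0 + a * N := by rw [hj0', hak, Nat.mul_comm]
      by_contra hMl
      have haM : M ≤ a * M := Nat.le_mul_of_pos_left M (by omega)
      have hemp := (key a j0 l).2 (by omega)
      rw [hj0''] at hx2
      have hmem : (j0 • v0 + ∑ i, (n i) • v i)
          ∈ truncA v0 v j0 l ∩ truncA v0 v (j0 + a * N) l := ⟨hx1, hx2⟩
      rw [hemp] at hmem
      exact hmem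
  -- conclude
  intro a j h
  have ecast : ((a * M : ℕ) : ℤ) = (a : ℤ) * (M : ℤ) := by push_cast; ring
  constructor
  · intro hc
    rw [hHM] at hc ⊢
    exact (key a j h).1 (by omega)
  · intro hc
    rw [hHM] at hc
    exact (key a j h).2 (by omega)
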